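/- Let H be a real inner product space, v₁, …, v_T ∈ H, σ > 0, and let K be the T×T Gram matrix with entries K_{ij} = ⟨v_i, v_j⟩. Fix w, w' ∈ H and set y = (⟨w, v_t⟩)_{t≤T}, y' = (⟨w', v_t⟩)_{t≤T}. For x ∈ H define k(x) = (⟨v_t, x⟩)_{t≤T}, μ(x) = k(x)ᵀ (K + σ²I)⁻¹ (y − y') + ⟨w', x⟩, and s(x)² = ‖x‖² − k(x)ᵀ (K + σ²I)⁻¹ k(x). Then for every x ∈ H, s(x)² ≥ 0 and |⟨w, x⟩ − μ(x)| ≤ ‖w − w'‖ · √(s(x)²). -/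

import Mathlib

open scoped RealInnerProductSpace Matrix

/-- The Gram matrix of a finite family of vectors in a real inner product space. -/
noncomputable def gram {H : Type*} [NormedAddCommGroup H] [InnerProductSpace ℝ H]
    {T : ℕ} (v : Fin T → H) : Matrix (Fin T) (Fin T) ℝ :=
  Matrix.of fun i j => ⟪v i, v j⟫

/-- The vector of inner products of a point `x` with the family `v`. -/
noncomputable def kvec {H : Type*} [NormedAddCommGroup H] [InnerProductSpace ℝ H]
    {T : ℕ} (v : Fin T → H) (x : H) : Fin T → ℝ :=
  fun i => ⟪v i, x⟫

section aux
variable {H : Type*} [NormedAddCommGroup H] [InnerProductSpace ℝ H] {T : ℕ}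

lemma gram_quad (v : Fin T → H) (c : Fin T → ℝ) :
    c ⬝ᵥ (gram v *ᵥ c) = ‖∑ t, c t • v t‖ ^ 2 := by
  rw [← real_inner_self_eq_norm_sq, sum_inner]
  simp only [dotProduct, Matrix.mulVec, dotProduct, gram, Matrix.of_apply]
  refine Finset.sum_congr rfl fun i _ => ?_
  simp only [real_inner_smul_left, inner_sum, real_inner_smul_right, Finset.mul_sum]
  exact Finset.sum_congr rfl fun j _ => by ring

lemma posDef_aux (v : Fin T → H) {σ : ℝ} (hσ : 0 < σ) :
    (gram v + σ ^ 2 • (1 : Matrix (Fin T) (Fin T) ℝ)).PosDef := by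
  refine Matrix.PosDef.of_dotProduct_mulVec_pos ?_ ?_
  · have h1 : (gram v).IsHermitian := by
      ext i j
      simp [gram, Matrix.conjTranspose_apply, real_inner_comm]
    have h2 : (σ ^ 2 • (1 : Matrix (Fin T) (Fin T) ℝ)).IsHermitian := by
      ext i j
      simp [Matrix.conjTranspose_apply, Matrix.one_apply, eq_comm]
    exact h1.add h2
  · intro c hc
    have hstar : star c = c := rfl
    rw [hstar, Matrix.add_mulVec, dotProduct_add, Matrix.smul_mulVec,
      Matrix.one_mulVec, gram_quad, dotProduct_smul]
    have h1 : (0:ℝ) ≤ ‖∑ t, c t • v t‖ ^ 2 := sq_nonneg _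
    have h2 : 0 < c ⬝ᵥ c := by
      have : c ⬝ᵥ c = ∑ i, c i ^ 2 := by simp [dotProduct, sq]
      rw [this]
      apply Finset.sum_pos' (fun i _ => sq_nonneg _)
      obtain ⟨i, hi⟩ := Function.ne_iff.mp hc
      exact ⟨i, Finset.mem_univ i, by rw [sq]; exact mul_self_pos.mpr hi⟩
    have := mul_pos (pow_pos hσ 2) h2
    simp only [smul_eq_mul]
    linarith

end aux

/-- **Noise-regularized Gaussian-process confidence bound with prior mean `⟪w', ·⟫`.**
With `μ(x) = k(x)ᵀ (K + σ²I)⁻¹ (y - y') + ⟪w', x⟫` and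
`s(x)² = ‖x‖² - k(x)ᵀ (K + σ²I)⁻¹ k(x)`, one has `s(x)² ≥ 0` and
`|⟪w, x⟫ - μ(x)| ≤ ‖w - w'‖ √(s(x)²)`. -/
theorem noisy_confidence_bound {H : Type*} [NormedAddCommGroup H] [InnerProductSpace ℝ H]
    (T : ℕ) (v : Fin T → H) (σ : ℝ) (hσ : 0 < σ) (w w' : H) (x : H) :
    let K : Matrix (Fin T) (Fin T) ℝ := gram v + σ ^ 2 • (1 : Matrix (Fin T) (Fin T) ℝ)
    let y : Fin T → ℝ := fun t => ⟪w, v t⟫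
    let y' : Fin T → ℝ := fun t => ⟪w', v t⟫
    let μ : ℝ := kvec v x ⬝ᵥ (K⁻¹ *ᵥ (y - y')) + ⟪w', x⟫
    let s2 : ℝ := ‖x‖ ^ 2 - kvec v x ⬝ᵥ (K⁻¹ *ᵥ kvec v x)
    0 ≤ s2 ∧ |⟪w, x⟫ - μ| ≤ ‖w - w'‖ * Real.sqrt s2 := by
  intro K y y' μ s2
  have hA : K.PosDef := posDef_aux v hσ
  have hAunit : IsUnit K.det := (Matrix.isUnit_iff_isUnit_det K).mp hA.isUnit
  set k : Fin T → ℝ := kvec v x with hk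
  set α : Fin T → ℝ := K⁻¹ *ᵥ k with hα
  set u : H := ∑ t, α t • v t with hu
  set r : H := x - u with hr
  set Δ : H := w - w' with hΔ
  -- K *ᵥ α = k
  have hKα : K *ᵥ α = k := by
    rw [hα, Matrix.mulVec_mulVec, Matrix.mul_nonsing_inv _ hAunit, Matrix.one_mulVec]
  -- symmetry of K⁻¹
  have hKsymm : Kᵀ = K := hA.isHermitian
  have hKinvsymm : (K⁻¹)ᵀ = K⁻¹ := by
    rw [Matrix.transpose_nonsing_inv, hKsymm]
  -- inner products with r
  have hvu : ∀ i, ⟪v i, u⟫ = (gram v *ᵥ α) i := by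
    intro i
    rw [hu, inner_sum]
    simp only [real_inner_smul_right, Matrix.mulVec, dotProduct, gram, Matrix.of_apply]
    exact Finset.sum_congr rfl fun j _ => mul_comm _ _
  have hgα : gram v *ᵥ α = k - σ ^ 2 • α := by
    have : K *ᵥ α = gram v *ᵥ α + σ ^ 2 • α := by
      rw [Matrix.add_mulVec, Matrix.smul_mulVec, Matrix.one_mulVec]
    rw [this] at hKα
    rw [← hKα]; abel
  have hvr : ∀ i, ⟪v i, r⟫ = σ ^ 2 * α i := by
    intro i
    rw [hr, inner_sub_right, hvu, hgα]
    simp [hk, kvec]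
  have hxr : ⟪x, r⟫ = s2 := by
    rw [hr, inner_sub_right, real_inner_self_eq_norm_sq, hu, inner_sum]
    simp only [real_inner_smul_right]
    have : kvec v x ⬝ᵥ (K⁻¹ *ᵥ kvec v x) = ∑ i, α i * ⟪x, v i⟫ := by
      rw [← hk, ← hα, dotProduct_comm]
      refine Finset.sum_congr rfl fun i _ => ?_
      rw [hk]; simp [kvec, real_inner_comm]
    simp only [s2, this]
  have hur : ⟪u, r⟫ = σ ^ 2 * ∑ i, α i ^ 2 := by
    rw [hu, sum_inner, Finset.mul_sum]
    refine Finset.sum_congr rfl fun i _ => ?_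
    rw [real_inner_smul_left, hvr]; ring
  have hrnorm : ‖r‖ ^ 2 = s2 - σ ^ 2 * ∑ i, α i ^ 2 := by
    rw [← real_inner_self_eq_norm_sq]
    calc ⟪r, r⟫ = ⟪x, r⟫ - ⟪u, r⟫ := by rw [hr, inner_sub_left]
    _ = s2 - σ ^ 2 * ∑ i, α i ^ 2 := by rw [hxr, hur]
  have hsum_nonneg : (0:ℝ) ≤ σ ^ 2 * ∑ i, α i ^ 2 := by positivity
  have hs2 : 0 ≤ s2 := by nlinarith [sq_nonneg ‖r‖]
  refine ⟨hs2, ?_⟩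
  -- the deviation equals ⟪Δ, r⟫
  have hdev : ⟪w, x⟫ - μ = ⟪Δ, r⟫ := by
    have hd : y - y' = fun t => ⟪Δ, v t⟫ := by
      funext t; simp [y, y', hΔ, inner_sub_left]
    have h1 : k ⬝ᵥ (K⁻¹ *ᵥ (y - y')) = α ⬝ᵥ (y - y') := by
      rw [Matrix.dotProduct_mulVec, ← Matrix.mulVec_transpose, hKinvsymm, hα]
    have h2 : α ⬝ᵥ (y - y') = ⟪Δ, u⟫ := by
      rw [hd, hu, inner_sum]
      simp only [real_inner_smul_right, dotProduct]
    have h3 : ⟪w, x⟫ - ⟪w', x⟫ = ⟪Δ, x⟫ := by rw [hΔ, inner_sub_left]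
    simp only [μ]
    rw [h1, h2]
    rw [hr, inner_sub_right, ← h3]
    ring
  rw [hdev]
  calc |⟪Δ, r⟫| ≤ ‖Δ‖ * ‖r‖ := abs_real_inner_le_norm Δ r
  _ ≤ ‖Δ‖ * Real.sqrt s2 := by
      apply mul_le_mul_of_nonneg_left _ (norm_nonneg _)
      rw [← Real.sqrt_sq (norm_nonneg r)]
      apply Real.sqrt_le_sqrt
      nlinarith
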